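/- Let H be a complex Hilbert space and let A be a compact self-adjoint operator on H. Let S be the non-negative self-adjoint square root of 16·I + A ∘ A (obtained via the continuous functional calculus). Then S − 4·I is a non-negative, self-adjoint, compact operator on H, and ‖(S − 4·I)x‖ ≤ (1/8)·‖A(Ax)‖ for every x ∈ H. -/

import Mathlib

set_option synthInstance.maxHeartbeats 1000000
set_option maxHeartbeats 1000000

theorem aux_compact_dom {H : Type*} [NormedAddCommGroup H] [InnerProductSpace ℂ H]
    [CompleteSpace H] (f g : H →L[ℂ] H) (c : ℝ) (hc0 : 0 ≤ c)
    (hfg : ∀ x, ‖g x‖ ≤ c * ‖f x‖) (hf : IsCompactOperator ⇑f) :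
    IsCompactOperator ⇑g := by
  obtain ⟨K₀, hK₀, hnhds⟩ := hf
  obtain ⟨δ, hδ, hball⟩ := Metric.mem_nhds_iff.mp hnhds
  have himg : ⇑f '' Metric.ball 0 δ ⊆ K₀ := Set.image_subset_iff.mpr hball
  have htb : TotallyBounded (⇑f '' Metric.ball 0 δ) := hK₀.totallyBounded.subset himg
  have htbg : TotallyBounded (⇑g '' Metric.ball 0 δ) := by
    rw [Metric.totallyBounded_iff]
    intro ε hε
    have hε' : 0 < ε / (c + 1) := by positivity
    obtain ⟨t, hts, htf, hcov⟩ := totallyBounded_iff_subset.mp htb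
      _ (Metric.dist_mem_uniformity hε')
    classical
    set ψ : H → H := fun y => if h : ∃ x ∈ Metric.ball (0:H) δ, f x = y
      then Classical.choose h else 0 with hψ
    refine ⟨(⇑g ∘ ψ) '' t, htf.image _, ?_⟩
    rintro - ⟨x, hx, rfl⟩
    obtain ⟨y, hy, hxy⟩ := Set.mem_iUnion₂.mp (hcov ⟨x, hx, rfl⟩)
    have hyex : ∃ x' ∈ Metric.ball (0:H) δ, f x' = y := by
      obtain ⟨x', hx', rfl⟩ := hts hy
      exact ⟨x', hx', rfl⟩
    obtain ⟨hx'mem, hfx'⟩ := Classical.choose_spec hyex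
    refine Set.mem_iUnion₂.mpr ⟨(⇑g ∘ ψ) y, Set.mem_image_of_mem _ hy, ?_⟩
    have hψy : ψ y = Classical.choose hyex := dif_pos hyex
    rw [Metric.mem_ball, dist_eq_norm]
    have hd : dist (f x) y < ε / (c + 1) := hxy
    calc ‖g x - g (ψ y)‖ = ‖g (x - ψ y)‖ := by rw [map_sub]
      _ ≤ c * ‖f (x - ψ y)‖ := hfg _
      _ = c * dist (f x) y := by rw [map_sub, hψy, hfx', dist_eq_norm]
      _ ≤ c * (ε / (c+1)) := mul_le_mul_of_nonneg_left hd.le hc0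
      _ < c * (ε / (c+1)) + (ε / (c+1)) := by linarith
      _ = (c + 1) * (ε / (c+1)) := by ring
      _ = ε := by field_simp
  refine ⟨closure (⇑g '' Metric.ball 0 δ), ?_, ?_⟩
  · exact htbg.closure.isCompact_of_isClosed isClosed_closure
  · exact Filter.mem_of_superset (Metric.ball_mem_nhds 0 hδ)
      fun x hx => subset_closure (Set.mem_image_of_mem _ hx)

open ContinuousLinearMap in
/-- Abstract content of the operator `K̃` from (4.18) and the estimate (4.19) in the proof of
Theorem 4.9: if `A` is compact self-adjoint and `S` is the non-negative self-adjoint square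
root of `16·I + A ∘ A`, then `S - 4·I` is non-negative, self-adjoint and compact, and
`‖(S - 4·I)x‖ ≤ (1/8)‖A(Ax)‖` for every `x`. -/
theorem stmt_5 {H : Type*} [NormedAddCommGroup H] [InnerProductSpace ℂ H] [CompleteSpace H]
    (A S : H →L[ℂ] H) (hA : IsSelfAdjoint A) (hAc : IsCompactOperator (⇑A))
    (hSpos : S.IsPositive)
    (hSsq : S ∘L S = (16 : ℂ) • (1 : H →L[ℂ] H) + A ∘L A) :
    (S - (4 : ℂ) • (1 : H →L[ℂ] H)).IsPositive ∧
    IsSelfAdjoint (S - (4 : ℂ) • (1 : H →L[ℂ] H)) ∧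
    IsCompactOperator (⇑(S - (4 : ℂ) • (1 : H →L[ℂ] H))) ∧
    ∀ x : H, ‖(S - (4 : ℂ) • (1 : H →L[ℂ] H)) x‖ ≤ (1 / 8) * ‖A (A x)‖ := by
  have hS : IsSelfAdjoint S := hSpos.isSelfAdjoint
  have hS0 : (0 : H →L[ℂ] H) ≤ S := (nonneg_iff_isPositive S).mpr hSpos
  have hmul : S * S = (16 : ℂ) • (1 : H →L[ℂ] H) + A * A := hSsq
  have h16 : ((16 : ℂ) • (1 : H →L[ℂ] H)) = algebraMap ℝ (H →L[ℂ] H) 16 := by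
    rw [Algebra.algebraMap_eq_smul_one, ← algebraMap_smul ℂ (16:ℝ) (1 : H →L[ℂ] H)]
    norm_num
  have h4 : ((4 : ℂ) • (1 : H →L[ℂ] H)) = algebraMap ℝ (H →L[ℂ] H) 4 := by
    rw [Algebra.algebraMap_eq_smul_one, ← algebraMap_smul ℂ (4:ℝ) (1 : H →L[ℂ] H)]
    norm_num
  -- S as a continuous functional calculus of A
  have hScfc : S = cfc (fun t : ℝ => Real.sqrt (16 + t^2)) A := by
    have hScfc' : CFC.sqrt (S * S) = S := CFC.sqrt_mul_self S hS0
    have h1 : cfc (fun t : ℝ => Real.sqrt (16 + t^2)) A *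
        cfc (fun t : ℝ => Real.sqrt (16 + t^2)) A = S * S := by
      rw [← cfc_mul ..]
      have : (fun t : ℝ => Real.sqrt (16 + t^2) * Real.sqrt (16 + t^2))
          = fun t : ℝ => 16 + t^2 := by
        funext t; exact Real.mul_self_sqrt (by positivity)
      rw [this, hmul, h16, cfc_add A (fun _ : ℝ => (16:ℝ)) (fun t : ℝ => t^2),
        cfc_const 16 A, cfc_pow_id A 2, sq]
    have h2 : (0 : H →L[ℂ] H) ≤ cfc (fun t : ℝ => Real.sqrt (16 + t^2)) A :=
      cfc_nonneg fun t _ => Real.sqrt_nonneg _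
    rw [← hScfc', ← h1, CFC.sqrt_mul_self _ h2]
  -- positivity of T = S - 4
  have hTcfc : S - (4 : ℂ) • (1 : H →L[ℂ] H)
      = cfc (fun t : ℝ => Real.sqrt (16 + t^2) - 4) A := by
    rw [cfc_sub (fun t : ℝ => Real.sqrt (16 + t^2)) (fun _ : ℝ => (4:ℝ)) A,
      cfc_const 4 A, ← hScfc, h4]
  have hT0 : (0 : H →L[ℂ] H) ≤ S - (4 : ℂ) • (1 : H →L[ℂ] H) := by
    rw [hTcfc]
    refine cfc_nonneg fun t _ => ?_
    have h16' : (4:ℝ) = Real.sqrt 16 := by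
      rw [show (16:ℝ) = 4^2 by norm_num, Real.sqrt_sq (by norm_num)]
    rw [sub_nonneg, h16']
    exact Real.sqrt_le_sqrt (le_add_of_nonneg_right (sq_nonneg t))
  have hTpos : (S - (4 : ℂ) • (1 : H →L[ℂ] H)).IsPositive :=
    (nonneg_iff_isPositive _).mp hT0
  -- key operator identity
  have hop : (S + (4 : ℂ) • (1 : H →L[ℂ] H)) * (S - (4 : ℂ) • (1 : H →L[ℂ] H)) = A * A := by
    set c : H →L[ℂ] H := (4 : ℂ) • (1 : H →L[ℂ] H) with hc
    have hcomm : S * c = c * S := by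
      rw [hc]; simp [mul_smul_comm, smul_mul_assoc]
    have hcc : c * c = (16 : ℂ) • (1 : H →L[ℂ] H) := by
      rw [hc, smul_mul_smul_comm]; norm_num
    calc (S + c) * (S - c) = S * S + c * S - (S * c + c * c) := by
          rw [mul_sub, add_mul, add_mul]
      _ = S * S - c * c := by rw [hcomm]; abel
      _ = A * A := by rw [hmul, hcc]; abel
  have hkey : ∀ x : H, A (A x)
      = S ((S - (4 : ℂ) • (1 : H →L[ℂ] H)) x) + (4:ℂ) • ((S - (4 : ℂ) • (1 : H →L[ℂ] H)) x) := by
    intro x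
    have := DFunLike.congr_fun hop x
    simpa [mul_apply'] using this.symm
  -- inner product identities from self-adjointness
  have hSadj : ContinuousLinearMap.adjoint S = S := ContinuousLinearMap.isSelfAdjoint_iff'.mp hS
  have hAadj : ContinuousLinearMap.adjoint A = A := ContinuousLinearMap.isSelfAdjoint_iff'.mp hA
  have hSinner : ∀ u v : H, inner ℂ (S u) v = inner ℂ u (S v) := by
    intro u v
    conv_lhs => rw [← hSadj]
    exact ContinuousLinearMap.adjoint_inner_left S v u
  have hAinner : ∀ u v : H, inner ℂ u (A v) = inner ℂ (A u) v := by
    intro u v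
    conv_lhs => rw [← hAadj]
    exact ContinuousLinearMap.adjoint_inner_right A u v
  have hbound : ∀ x : H, ‖(S - (4 : ℂ) • (1 : H →L[ℂ] H)) x‖ ≤ (1 / 8) * ‖A (A x)‖ := by
    intro x
    set y := (S - (4 : ℂ) • (1 : H →L[ℂ] H)) x with hy
    have h1 : ‖S y‖^2 = 16*‖y‖^2 + ‖A y‖^2 := by
      have e1 : inner ℂ (S y) (S y) = inner ℂ y (S (S y)) := hSinner y (S y)
      have e2 : S (S y) = (16:ℂ) • y + A (A y) := by
        have := DFunLike.congr_fun hSsq y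
        simpa using this
      rw [e2, inner_add_right, inner_smul_right, hAinner y (A y)] at e1
      have := congrArg Complex.re e1
      simpa [inner_self_eq_norm_sq_to_K, Complex.add_re, Complex.mul_re,
        ← Complex.ofReal_pow, Complex.ofReal_re] using this
    have h2 : 4*‖y‖^2 ≤ RCLike.re (inner ℂ (S y) y) := by
      have h0 := hTpos.inner_nonneg_left y
      have e5 : (S - (4 : ℂ) • (1 : H →L[ℂ] H)) y = S y - (4:ℂ) • y := by simp
      rw [e5, inner_sub_left, inner_smul_left] at h0
      replace h0 := (RCLike.le_iff_re_im.mp h0).1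
      rw [map_zero, map_sub] at h0
      have e6 : RCLike.re ((starRingEnd ℂ) 4 * inner ℂ y y) = 4 * ‖y‖^2 := by
        simp [inner_self_eq_norm_sq_to_K, Complex.mul_re, ← Complex.ofReal_pow]
      rw [e6] at h0
      linarith
    have h3 : (8*‖y‖)^2 ≤ ‖A (A x)‖^2 := by
      rw [hkey x, ← hy, norm_add_sq (𝕜 := ℂ)]
      have e3 : RCLike.re (inner ℂ (S y) ((4:ℂ) • y)) = 4 * RCLike.re (inner ℂ (S y) y) := by
        rw [inner_smul_right]
        simp [Complex.mul_re]
      have e4 : ‖(4:ℂ) • y‖^2 = 16 * ‖y‖^2 := by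
        rw [norm_smul]
        norm_num
        ring
      rw [e3, e4]
      nlinarith [h1, h2, sq_nonneg (‖A y‖)]
    have h4' := Real.sqrt_le_sqrt h3
    rw [Real.sqrt_sq (by positivity), Real.sqrt_sq (norm_nonneg _)] at h4'
    linarith
  refine ⟨hTpos, hTpos.isSelfAdjoint, ?_, hbound⟩
  have hAAc : IsCompactOperator ⇑(A ∘L A) := by
    have := hAc.comp_clm A
    rwa [ContinuousLinearMap.coe_comp']
  exact aux_compact_dom (A ∘L A) (S - (4 : ℂ) • (1 : H →L[ℂ] H)) (1/8) (by norm_num)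
    (by simpa using hbound) hAAc
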